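/- Let G=(V,E) be a finite simple graph with n = |V| and m = |E|, and let a ∈ D = V ∪ E be any element of G. The nonnegativity inequality z_a ≥ 0 is facet-defining for the Total Matching Polytope P_T(G): there exist n+m affinely independent characteristic vectors of total matchings of G whose coordinate at a equals 0. -/

import Mathlib

open Finset

variable {V : Type*}

/-- A total matching of a graph `G`: a set `S` of vertices and a set `M` of edges
such that the elements of `S ∪ M` are pairwise non-adjacent. -/
def IsTotalMatching (G : SimpleGraph V) (S : Finset V) (M : Finset (Sym2 V)) : Prop :=
  (↑M ⊆ G.edgeSet) ∧
  (∀ v ∈ S, ∀ w ∈ S, ¬ G.Adj v w) ∧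
  (∀ e ∈ M, ∀ f ∈ M, e ≠ f → ∀ v : V, ¬(v ∈ e ∧ v ∈ f)) ∧
  (∀ v ∈ S, ∀ e ∈ M, v ∉ e)

/-- Characteristic vector of a total matching, with vertex coordinates and edge coordinates. -/
def charVec [DecidableEq V] (S : Finset V) (M : Finset (Sym2 V)) :
    (V → ℝ) × (Sym2 V → ℝ) :=
  (fun v => if v ∈ S then 1 else 0, fun e => if e ∈ M then 1 else 0)

/-- The total matching polytope: convex hull of characteristic vectors of total matchings. -/
def totalMatchingPolytope [DecidableEq V] (G : SimpleGraph V) :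
    Set ((V → ℝ) × (Sym2 V → ℝ)) :=
  convexHull ℝ {p | ∃ S M, IsTotalMatching G S M ∧ p = charVec S M}


section Aux

variable [DecidableEq V] [Fintype V]

/-- The "big" family: zero together with all standard basis vectors. -/
noncomputable def bigP (o : Option (V ⊕ Sym2 V)) : (V → ℝ) × (Sym2 V → ℝ) :=
  o.elim 0 ((Pi.basisFun ℝ V).prod (Pi.basisFun ℝ (Sym2 V)))

lemma bigP_eq_charVec_empty : bigP (none : Option (V ⊕ Sym2 V)) = charVec ∅ ∅ := by
  simp [bigP, charVec]
  rfl

lemma bigP_inl (v : V) : bigP (some (Sum.inl v)) = charVec {v} (∅ : Finset (Sym2 V)) := by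
  ext x
  · simp [bigP, charVec, Module.Basis.prod_apply, Pi.basisFun_apply, Pi.single_apply, eq_comm]
  · simp [bigP, charVec, Module.Basis.prod_apply]

lemma bigP_inr (e : Sym2 V) : bigP (some (Sum.inr e)) = charVec (∅ : Finset V) {e} := by
  ext x
  · simp [bigP, charVec, Module.Basis.prod_apply]
  · simp [bigP, charVec, Module.Basis.prod_apply, Pi.basisFun_apply, Pi.single_apply, eq_comm]

def someEquiv (α : Type*) : α ≃ {x : Option α // x ≠ none} where
  toFun i := ⟨some i, by simp⟩
  invFun x := x.1.get (Option.ne_none_iff_isSome.mp x.2)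
  left_inv i := rfl
  right_inv x := by ext; simp

lemma bigP_affineIndependent : AffineIndependent ℝ (bigP (V := V)) := by
  rw [affineIndependent_iff_linearIndependent_vsub ℝ bigP none]
  set e := someEquiv (V ⊕ Sym2 V) with he'
  rw [← linearIndependent_equiv e]
  have : (fun i : {x : Option (V ⊕ Sym2 V) // x ≠ none} =>
      bigP (i : Option (V ⊕ Sym2 V)) -ᵥ bigP none) ∘ e
      = ⇑((Pi.basisFun ℝ V).prod (Pi.basisFun ℝ (Sym2 V))) := by
    have he : ∀ i, ((e i : {x : Option (V ⊕ Sym2 V) // x ≠ none}) : Option (V ⊕ Sym2 V))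
        = some i := fun i => rfl
    funext i
    simp only [Function.comp_apply, he]
    simp [bigP]
  rw [this]
  exact ((Pi.basisFun ℝ V).prod (Pi.basisFun ℝ (Sym2 V))).linearIndependent

lemma charVec_inj : Function.Injective
    (fun q : Finset V × Finset (Sym2 V) => charVec q.1 q.2) := by
  intro p q h
  have h1 := congrArg Prod.fst h
  have h2 := congrArg Prod.snd h
  ext x
  · have := congrFun h1 x
    simp only [charVec] at this
    by_cases hp : x ∈ p.1 <;> by_cases hq : x ∈ q.1 <;> simp [hp, hq] at this ⊢
  · have := congrFun h2 x
    simp only [charVec] at this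
    by_cases hp : x ∈ p.2 <;> by_cases hq : x ∈ q.2 <;> simp [hp, hq] at this ⊢

variable [Fintype V]

lemma main_aux (G : SimpleGraph V) [DecidableRel G.Adj]
    (VS : Finset V) (ES : Finset (Sym2 V)) (hES : ES ⊆ G.edgeFinset) :
    ∃ F : Finset (Finset V × Finset (Sym2 V)),
      F.card = VS.card + ES.card + 1 ∧
      (∀ q ∈ F, IsTotalMatching G q.1 q.2) ∧
      (∀ q ∈ F, q.1 ⊆ VS ∧ q.2 ⊆ ES) ∧
      AffineIndependent ℝ (fun q : F => charVec q.1.1 q.1.2) := by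
  classical
  set F : Finset (Finset V × Finset (Sym2 V)) :=
    insert (∅, ∅) (VS.image (fun v => (({v} : Finset V), (∅ : Finset (Sym2 V)))) ∪
      ES.image (fun e => ((∅ : Finset V), ({e} : Finset (Sym2 V))))) with hF
  have memF : ∀ q ∈ F, q = (∅, ∅) ∨ (∃ v ∈ VS, q = ({v}, ∅)) ∨ ∃ e ∈ ES, q = (∅, {e}) := by
    intro q hq
    simp only [hF, mem_insert, mem_union, mem_image] at hq
    rcases hq with h | ⟨v, hv, h⟩ | ⟨e, he, h⟩
    · exact Or.inl h
    · exact Or.inr (Or.inl ⟨v, hv, h.symm⟩)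
    · exact Or.inr (Or.inr ⟨e, he, h.symm⟩)
  refine ⟨F, ?_, ?_, ?_, ?_⟩
  · have hinj1 : Function.Injective (fun v : V => (({v} : Finset V), (∅ : Finset (Sym2 V)))) := by
      intro a b h
      simpa using congrArg Prod.fst h
    have hinj2 : Function.Injective (fun e : Sym2 V => ((∅ : Finset V), ({e} : Finset (Sym2 V)))) := by
      intro a b h
      simpa using congrArg Prod.snd h
    have hdisj : Disjoint (VS.image (fun v => (({v} : Finset V), (∅ : Finset (Sym2 V)))))
        (ES.image (fun e => ((∅ : Finset V), ({e} : Finset (Sym2 V))))) := by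
      rw [disjoint_left]
      rintro p hp hq
      simp only [mem_image] at hp hq
      obtain ⟨v, _, rfl⟩ := hp
      obtain ⟨e, _, h⟩ := hq
      simp [Prod.ext_iff] at h
    have hnm : ((∅, ∅) : Finset V × Finset (Sym2 V)) ∉
        VS.image (fun v => (({v} : Finset V), (∅ : Finset (Sym2 V)))) ∪
        ES.image (fun e => ((∅ : Finset V), ({e} : Finset (Sym2 V)))) := by
      simp only [mem_union, mem_image, not_or, not_exists]
      constructor
      · rintro v ⟨_, h⟩
        simp [Prod.ext_iff] at h
      · rintro e ⟨_, h⟩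
        simp [Prod.ext_iff] at h
    rw [hF, card_insert_of_notMem hnm, card_union_of_disjoint hdisj,
      card_image_of_injective _ hinj1, card_image_of_injective _ hinj2]
  · intro q hq
    rcases memF q hq with rfl | ⟨v, hv, rfl⟩ | ⟨e, he, rfl⟩
    · exact ⟨by simp, by simp, by simp, by simp⟩
    · refine ⟨by simp, ?_, by simp, by simp⟩
      intro x hx y hy
      simp only [mem_singleton] at hx hy
      subst hx; subst hy
      exact G.irrefl
    · refine ⟨?_, by simp, ?_, by simp⟩
      · intro x hx
        simp only [Finset.coe_singleton, Set.mem_singleton_iff] at hx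
        subst hx
        exact (SimpleGraph.mem_edgeFinset).1 (hES he)
      · intro e' he' f hf hne
        simp only [mem_singleton] at he' hf
        subst he'; subst hf
        exact absurd rfl hne
  · intro q hq
    rcases memF q hq with rfl | ⟨v, hv, rfl⟩ | ⟨e, he, rfl⟩
    · exact ⟨by simp, by simp⟩
    · exact ⟨by simpa using hv, by simp⟩
    · exact ⟨by simp, by simpa using he⟩
  · -- affine independence
    have key : ∀ q : F, ∃ o : Option (V ⊕ Sym2 V), bigP o = charVec q.1.1 q.1.2 := by
      rintro ⟨q, hq⟩
      rcases memF q hq with rfl | ⟨v, _, rfl⟩ | ⟨e, _, rfl⟩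
      · exact ⟨none, bigP_eq_charVec_empty⟩
      · exact ⟨some (Sum.inl v), bigP_inl v⟩
      · exact ⟨some (Sum.inr e), bigP_inr e⟩
    choose ι hι using key
    have hinj : Function.Injective ι := by
      intro p q h
      have h1 : charVec p.1.1 p.1.2 = charVec q.1.1 q.1.2 := by
        rw [← hι p, ← hι q, h]
      have := charVec_inj h1
      exact Subtype.ext (Prod.ext (congrArg Prod.fst this) (congrArg Prod.snd this))
    have := bigP_affineIndependent.comp_embedding ⟨ι, hinj⟩
    convert this using 1
    funext q
    exact (hι q).symm

end Aux

/-- For any element `a ∈ D = V ∪ E` of `G`, the nonnegativity inequality `z_a ≥ 0` is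
facet-defining for the total matching polytope: there exist `n + m` affinely independent
characteristic vectors of total matchings whose coordinate at `a` equals `0`. -/
theorem nonnegativity_facet [Fintype V] [DecidableEq V]
    (G : SimpleGraph V) [DecidableRel G.Adj] (a : V ⊕ G.edgeSet) :
    ∃ F : Finset (Finset V × Finset (Sym2 V)),
      F.card = Fintype.card V + G.edgeFinset.card ∧
      (∀ q ∈ F, IsTotalMatching G q.1 q.2 ∧
        Sum.elim (charVec q.1 q.2).1 (fun e : G.edgeSet => (charVec q.1 q.2).2 e) a = 0) ∧
      AffineIndependent ℝ (fun q : F => charVec q.1.1 q.1.2) := by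
  classical
  rcases a with v0 | e0
  · obtain ⟨F, hcard, hTM, hsub, hAI⟩ :=
      main_aux G (Finset.univ.erase v0) G.edgeFinset (le_refl _)
    refine ⟨F, ?_, ?_, hAI⟩
    · rw [hcard, card_erase_of_mem (mem_univ v0), Finset.card_univ]
      have : 1 ≤ Fintype.card V := Fintype.card_pos_iff.mpr ⟨v0⟩
      omega
    · intro q hq
      refine ⟨hTM q hq, ?_⟩
      simp only [Sum.elim_inl, charVec]
      have : v0 ∉ q.1 := fun h => by simpa using (hsub q hq).1 h
      simp [this]
  · obtain ⟨F, hcard, hTM, hsub, hAI⟩ :=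
      main_aux G Finset.univ (G.edgeFinset.erase (e0 : Sym2 V)) (erase_subset _ _)
    have he0 : (e0 : Sym2 V) ∈ G.edgeFinset := SimpleGraph.mem_edgeFinset.mpr e0.2
    refine ⟨F, ?_, ?_, hAI⟩
    · rw [hcard, card_erase_of_mem he0, Finset.card_univ]
      have : 1 ≤ G.edgeFinset.card := card_pos.mpr ⟨_, he0⟩
      omega
    · intro q hq
      refine ⟨hTM q hq, ?_⟩
      simp only [Sum.elim_inr, charVec]
      have : (e0 : Sym2 V) ∉ q.2 := fun h => by
        have := (hsub q hq).2 h
        simp at this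
      simp [this]
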